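/- arXiv:1411.4022 — 3 statements merged into one kernel-verified Lean document; each statement's English description precedes it below -/
import Mathlib

section
/- Let n ≥ 1 and let A, B be finite multisets of pairs (x, y) ∈ ℝ^n × ℝ^n. If p_{a,b}(A) = p_{a,b}(B) for every (a, b) with a ∈ ℕ₊^n and b ∈ ℕ^n, then the multisets obtained from A and B by removing all degenerate pairs are equal. -/
open scoped Classical

/-- `p_{a,b}(M) = Σ_{(x,y) ∈ M} ∏_j (y_j - x_j)^{a_j} (y_j + x_j)^{b_j}`. -/
noncomputable def pInv (n : ℕ) (a b : Fin n → ℕ)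
    (M : Multiset ((Fin n → ℝ) × (Fin n → ℝ))) : ℝ :=
  (M.map (fun xy => ∏ j, (xy.2 j - xy.1 j) ^ a j * (xy.2 j + xy.1 j) ^ b j)).sum

namespace Stmt11Aux

open MvPolynomial

variable {n : ℕ}

/-- The coordinate change `(x,y) ↦ (y-x, y+x)` as a point of `ℝ^{2n}`. -/
def emb (p : (Fin n → ℝ) × (Fin n → ℝ)) : (Fin n ⊕ Fin n) → ℝ :=
  Sum.elim (fun j => p.2 j - p.1 j) (fun j => p.2 j + p.1 j)

lemma emb_injective : Function.Injective (emb (n := n)) := by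
  intro p q h
  have h1 : ∀ j, p.2 j - p.1 j = q.2 j - q.1 j := fun j => congrFun h (Sum.inl j)
  have h2 : ∀ j, p.2 j + p.1 j = q.2 j + q.1 j := fun j => congrFun h (Sum.inr j)
  refine Prod.ext (funext fun j => ?_) (funext fun j => ?_)
  · have := h1 j; have := h2 j; linarith
  · have := h1 j; have := h2 j; linarith

/-- Moment functional. -/
noncomputable def S (M : Multiset ((Fin n → ℝ) × (Fin n → ℝ)))
    (P : MvPolynomial (Fin n ⊕ Fin n) ℝ) : ℝ :=
  (M.map (fun p => eval (emb p) P)).sum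

lemma S_add (M : Multiset ((Fin n → ℝ) × (Fin n → ℝ)))
    (P Q : MvPolynomial (Fin n ⊕ Fin n) ℝ) : S M (P + Q) = S M P + S M Q := by
  unfold S
  rw [← Multiset.sum_map_add]
  exact congrArg _ (Multiset.map_congr rfl fun p _ => by rw [eval_add])

lemma S_Cmul (M : Multiset ((Fin n → ℝ) × (Fin n → ℝ))) (c : ℝ)
    (P : MvPolynomial (Fin n ⊕ Fin n) ℝ) : S M (C c * P) = c * S M P := by
  unfold S
  rw [← Multiset.sum_map_mul_left]
  exact congrArg _ (Multiset.map_congr rfl fun p _ => by rw [eval_mul, eval_C])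

/-- Exponent finsupp built from a pair of exponent vectors. -/
noncomputable def ab (a b : Fin n → ℕ) : (Fin n ⊕ Fin n) →₀ ℕ :=
  Finsupp.equivFunOnFinite.symm (Sum.elim a b)

@[simp] lemma ab_inl (a b : Fin n → ℕ) (j : Fin n) : ab a b (Sum.inl j) = a j := rfl
@[simp] lemma ab_inr (a b : Fin n → ℕ) (j : Fin n) : ab a b (Sum.inr j) = b j := rfl

lemma eval_monomial_ab (a b : Fin n → ℕ) (p : (Fin n → ℝ) × (Fin n → ℝ)) :
    eval (emb p) (monomial (ab a b) 1) =
      ∏ j, (p.2 j - p.1 j) ^ a j * (p.2 j + p.1 j) ^ b j := by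
  rw [eval_monomial, one_mul, Finsupp.prod_fintype _ _ (fun c => pow_zero _)]
  rw [Fintype.prod_sum_type, ← Finset.prod_mul_distrib]
  rfl

lemma S_monomial (a b : Fin n → ℕ) (M : Multiset ((Fin n → ℝ) × (Fin n → ℝ))) :
    S M (monomial (ab a b) 1) = pInv n a b M := by
  unfold S pInv
  exact congrArg _ (Multiset.map_congr rfl fun p _ => eval_monomial_ab a b p)

/-- The weight polynomial `∏_j X_{inl j}` (as a monomial). -/
noncomputable def w (n : ℕ) : MvPolynomial (Fin n ⊕ Fin n) ℝ :=
  monomial (ab (fun _ => 1) (fun _ => 0)) 1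

lemma eval_w (p : (Fin n → ℝ) × (Fin n → ℝ)) :
    eval (emb p) (w n) = ∏ j, (p.2 j - p.1 j) := by
  rw [w, eval_monomial_ab]
  simp

lemma key (A B : Multiset ((Fin n → ℝ) × (Fin n → ℝ)))
    (h : ∀ a b : Fin n → ℕ, (∀ j, 1 ≤ a j) → pInv n a b A = pInv n a b B)
    (P : MvPolynomial (Fin n ⊕ Fin n) ℝ) : S A (w n * P) = S B (w n * P) := by
  induction P using MvPolynomial.induction_on' with
  | add P Q hP hQ => rw [mul_add, S_add, S_add, hP, hQ]
  | monomial d c =>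
      have hd : ab (fun _ : Fin n => 1) (fun _ => 0) + d =
          ab (fun j => 1 + d (Sum.inl j)) (fun j => d (Sum.inr j)) := by
        ext c
        cases c <;> simp
      have hw : w n * monomial d c =
          C c * monomial (ab (fun j => 1 + d (Sum.inl j)) (fun j => d (Sum.inr j))) 1 := by
        rw [w, monomial_mul, one_mul, ← hd, C_mul_monomial, mul_one]
      rw [hw, S_Cmul, S_Cmul, S_monomial, S_monomial,
        h _ _ (fun j => Nat.le_add_right 1 _)]

lemma S_filter (M : Multiset ((Fin n → ℝ) × (Fin n → ℝ)))
    (P : MvPolynomial (Fin n ⊕ Fin n) ℝ) :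
    S M (w n * P) = S (M.filter (fun p => ∀ j, p.1 j ≠ p.2 j)) (w n * P) := by
  conv_lhs => rw [← Multiset.filter_add_not (fun p => ∀ j, p.1 j ≠ p.2 j) M]
  unfold S
  rw [Multiset.map_add, Multiset.sum_add]
  have hz : ∀ p ∈ M.filter (fun p => ¬ ∀ j, p.1 j ≠ p.2 j),
      eval (emb p) (w n * P) = 0 := by
    intro p hp
    have hp' : ¬ ∀ j, p.1 j ≠ p.2 j := (Multiset.mem_filter.mp hp).2
    push_neg at hp'
    obtain ⟨j, hj⟩ := hp'
    rw [eval_mul, eval_w, Finset.prod_eq_zero (Finset.mem_univ j) (by rw [hj, sub_self]),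
      zero_mul]
  rw [Multiset.map_congr rfl hz]
  simp

lemma sum_map_ite {α : Type*} [DecidableEq α] (M : Multiset α) (q : α) (c : ℝ) :
    (M.map (fun p => if p = q then c else 0)).sum = (M.count q : ℝ) * c := by
  induction M using Multiset.induction with
  | empty => simp
  | cons a s ih =>
      simp only [Multiset.map_cons, Multiset.sum_cons, ih, Multiset.count_cons]
      by_cases hq : a = q
      · subst hq; simp; push_cast; ring
      · rw [if_neg hq, if_neg (fun hh => hq hh.symm)]
        push_cast; ring

end Stmt11Aux

/-- If `p_{a,b}(A) = p_{a,b}(B)` for all `(a,b)` with `a ∈ ℕ₊^n`, then `A`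
and `B` agree after removing all degenerate pairs (pairs with `x_j = y_j` for some `j`). -/
theorem stmt11 (n : ℕ) (hn : 1 ≤ n)
    (A B : Multiset ((Fin n → ℝ) × (Fin n → ℝ)))
    (h : ∀ a b : Fin n → ℕ, (∀ j, 1 ≤ a j) → pInv n a b A = pInv n a b B) :
    A.filter (fun xy => ∀ j, xy.1 j ≠ xy.2 j) =
      B.filter (fun xy => ∀ j, xy.1 j ≠ xy.2 j) := by
  classical
  open MvPolynomial Stmt11Aux in
  set pred : ((Fin n → ℝ) × (Fin n → ℝ)) → Prop := fun xy => ∀ j, xy.1 j ≠ xy.2 j with hpred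
  set A' := A.filter pred with hA'
  set B' := B.filter pred with hB'
  refine Multiset.ext.mpr fun q => ?_
  by_cases hq : pred q
  · -- nondegenerate point: use an interpolation polynomial
    set t : (Fin n ⊕ Fin n) → ℝ := emb q with ht
    set s : Finset ((Fin n ⊕ Fin n) → ℝ) := (A' + B').toFinset.image emb with hs
    set P : MvPolynomial (Fin n ⊕ Fin n) ℝ :=
      ∏ u ∈ s.erase t,
        (C ((∑ c, (t c - u c) ^ 2)⁻¹) * ∑ c, (X c - C (u c)) * C (t c - u c)) with hP
    have evalfac : ∀ (v : (Fin n ⊕ Fin n) → ℝ) (u : (Fin n ⊕ Fin n) → ℝ),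
        eval v (C ((∑ c, (t c - u c) ^ 2)⁻¹) * ∑ c, (X c - C (u c)) * C (t c - u c)) =
          (∑ c, (t c - u c) ^ 2)⁻¹ * ∑ c, (v c - u c) * (t c - u c) := by
      intro v u
      simp [eval_sum]
    have sumsq_ne : ∀ u ∈ s.erase t, (∑ c, (t c - u c) ^ 2) ≠ 0 := by
      intro u hu
      have hut : u ≠ t := (Finset.mem_erase.mp hu).1
      obtain ⟨c0, hc0⟩ : ∃ c, u c ≠ t c := by
        by_contra hc; push_neg at hc; exact hut (funext hc)
      have : 0 < ∑ c, (t c - u c) ^ 2 := by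
        refine Finset.sum_pos' (fun c _ => sq_nonneg _) ⟨c0, Finset.mem_univ _, ?_⟩
        have : t c0 - u c0 ≠ 0 := sub_ne_zero.mpr (fun hh => hc0 hh.symm)
        positivity
      exact ne_of_gt this
    have hPt : eval t P = 1 := by
      rw [hP, eval_prod]
      refine Finset.prod_eq_one fun u hu => ?_
      rw [evalfac]
      have hsq : (∑ c, (t c - u c) * (t c - u c)) = ∑ c, (t c - u c) ^ 2 :=
        Finset.sum_congr rfl fun c _ => (pow_two (t c - u c)).symm
      rw [hsq]
      exact inv_mul_cancel₀ (sumsq_ne u hu)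
    have hPu : ∀ u ∈ s, u ≠ t → eval u P = 0 := by
      intro u hu hut
      rw [hP, eval_prod]
      refine Finset.prod_eq_zero (Finset.mem_erase.mpr ⟨hut, hu⟩) ?_
      rw [evalfac]
      simp
    set wv : ℝ := ∏ j, (q.2 j - q.1 j) with hwv
    have hcount : ∀ M : Multiset ((Fin n → ℝ) × (Fin n → ℝ)),
        (∀ p ∈ M, emb p ∈ s) → S M (w n * P) = (M.count q : ℝ) * wv := by
      intro M hM
      unfold S
      rw [Multiset.map_congr rfl
        (g := fun p => if p = q then wv else 0) ?_]
      · exact sum_map_ite M q wv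
      intro p hp
      by_cases hpq : p = q
      · subst hpq
        rw [eval_mul, eval_w, ← ht, hPt, mul_one]
        simp [hwv]
      · rw [eval_mul, hPu (emb p) (hM p hp) (fun hc => hpq (emb_injective hc)),
          mul_zero]
        simp [hpq]
    have hmemA : ∀ p ∈ A', emb p ∈ s := fun p hp =>
      Finset.mem_image_of_mem _ (Multiset.mem_toFinset.mpr (Multiset.mem_add.mpr (Or.inl hp)))
    have hmemB : ∀ p ∈ B', emb p ∈ s := fun p hp =>
      Finset.mem_image_of_mem _ (Multiset.mem_toFinset.mpr (Multiset.mem_add.mpr (Or.inr hp)))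
    have hkey : S A' (w n * P) = S B' (w n * P) := by
      rw [hA', hB', ← S_filter, ← S_filter]
      exact key A B h P
    rw [hcount A' hmemA, hcount B' hmemB] at hkey
    have hwv0 : wv ≠ 0 := by
      rw [hwv]
      exact Finset.prod_ne_zero_iff.mpr fun j _ => sub_ne_zero.mpr (Ne.symm (hq j))
    exact_mod_cast mul_right_cancel₀ hwv0 hkey
  · rw [hA', hB', Multiset.count_filter, Multiset.count_filter, if_neg hq, if_neg hq]
end

section
/- Let n ≥ 1 and let A, B, C, D be finite multisets of pairs (x, y) ∈ ℝ^n × ℝ^n. If p_{a,b}(A) − p_{a,b}(B) = p_{a,b}(C) − p_{a,b}(D) for every (a, b) with a ∈ ℕ₊^n and b ∈ ℕ^n, then the multisets obtained from A + D and from B + C (multiset sum) by removing all degenerate pairs are equal. -/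
open scoped Classical

open MvPolynomial

lemma sum_map_ite {α : Type*} [DecidableEq α] (M : Multiset α) (q : α) (c : ℝ) :
    (M.map fun x => if x = q then c else 0).sum = M.count q * c := by
  induction M using Multiset.induction with
  | empty => simp
  | cons a s ih =>
    by_cases hh : a = q
    · simp [hh, ih, Multiset.count_cons, add_mul, add_comm]
    · rw [Multiset.map_cons, Multiset.sum_cons, if_neg hh, ih, Multiset.count_cons,
        if_neg (Ne.symm hh), add_zero, zero_add]

/-- If `p_{a,b}(A) - p_{a,b}(B) = p_{a,b}(C) - p_{a,b}(D)` for all `(a,b)`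
with `a ∈ ℕ₊^n`, then `A + D` and `B + C` agree after removing all degenerate pairs
(pairs with `x_j = y_j` for some `j`). -/
theorem stmt12 (n : ℕ) (hn : 1 ≤ n)
    (A B C D : Multiset ((Fin n → ℝ) × (Fin n → ℝ)))
    (h : ∀ a b : Fin n → ℕ, (∀ j, 1 ≤ a j) →
      pInv n a b A - pInv n a b B = pInv n a b C - pInv n a b D) :
    (A + D).filter (fun xy => ∀ j, xy.1 j ≠ xy.2 j) =
      (B + C).filter (fun xy => ∀ j, xy.1 j ≠ xy.2 j) := by
  classical
  set val : ((Fin n → ℝ) × (Fin n → ℝ)) → (Fin n ⊕ Fin n) → ℝ :=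
    fun xy => Sum.elim (fun j => xy.2 j - xy.1 j) (fun j => xy.2 j + xy.1 j) with hvaldef
  have val_inj : Function.Injective val := by
    intro p q hpq
    have h1 : ∀ j, p.2 j - p.1 j = q.2 j - q.1 j := fun j => congrFun hpq (Sum.inl j)
    have h2 : ∀ j, p.2 j + p.1 j = q.2 j + q.1 j := fun j => congrFun hpq (Sum.inr j)
    have hx : p.1 = q.1 := by funext j; have := h1 j; have := h2 j; linarith
    have hy : p.2 = q.2 := by funext j; have := h1 j; have := h2 j; linarith
    exact Prod.ext hx hy
  -- per-point monomial evaluation identity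
  have point : ∀ (xy : (Fin n → ℝ) × (Fin n → ℝ)) (u : (Fin n ⊕ Fin n) →₀ ℕ) (c : ℝ),
      aeval (val xy) ((∏ j, X (Sum.inl j)) * monomial u c)
      = c * ∏ j, (xy.2 j - xy.1 j) ^ (u (Sum.inl j) + 1) * (xy.2 j + xy.1 j) ^ (u (Sum.inr j)) := by
    intro xy u c
    rw [map_mul, map_prod, aeval_monomial, Finsupp.prod_fintype _ _ (by intro; simp)]
    simp only [aeval_X, map_id, Algebra.algebraMap_self, RingHom.id_apply, hvaldef,
      Sum.elim_inl, Sum.elim_inr, Fintype.prod_sum_type, Finset.prod_mul_distrib, pow_succ]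
    ring
  -- the key vanishing fact
  have key : ∀ P : MvPolynomial (Fin n ⊕ Fin n) ℝ,
      ((A + D).map fun xy => aeval (val xy) ((∏ j, X (Sum.inl j)) * P)).sum
      = ((B + C).map fun xy => aeval (val xy) ((∏ j, X (Sum.inl j)) * P)).sum := by
    intro P
    induction P using MvPolynomial.induction_on' with
    | monomial u c =>
      have heq := h (fun j => u (Sum.inl j) + 1) (fun j => u (Sum.inr j))
        (fun j => Nat.le_add_left 1 _)
      have sum_eq : ∀ M : Multiset ((Fin n → ℝ) × (Fin n → ℝ)),
          (M.map fun xy => aeval (val xy) ((∏ j, X (Sum.inl j)) * monomial u c)).sum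
          = c * pInv n (fun j => u (Sum.inl j) + 1) (fun j => u (Sum.inr j)) M := by
        intro M
        rw [pInv, ← Multiset.sum_map_mul_left]
        exact congrArg Multiset.sum (Multiset.map_congr rfl (fun xy _ => point xy u c))
      simp only [Multiset.map_add, Multiset.sum_add, sum_eq]
      rw [← mul_add, ← mul_add]
      congr 1
      linarith
    | add p q hp hq =>
      have expand : ∀ xy : (Fin n → ℝ) × (Fin n → ℝ),
          aeval (val xy) ((∏ j, X (Sum.inl j)) * (p + q))
          = aeval (val xy) ((∏ j, X (Sum.inl j)) * p)
            + aeval (val xy) ((∏ j, X (Sum.inl j)) * q) := by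
        intro xy; rw [mul_add, map_add]
      calc ((A + D).map fun xy => aeval (val xy) ((∏ j, X (Sum.inl j)) * (p + q))).sum
          = ((A + D).map fun xy => aeval (val xy) ((∏ j, X (Sum.inl j)) * p)
              + aeval (val xy) ((∏ j, X (Sum.inl j)) * q)).sum := by
            exact congrArg Multiset.sum (Multiset.map_congr rfl fun xy _ => expand xy)
        _ = ((A + D).map fun xy => aeval (val xy) ((∏ j, X (Sum.inl j)) * p)).sum
              + ((A + D).map fun xy => aeval (val xy) ((∏ j, X (Sum.inl j)) * q)).sum :=
            Multiset.sum_map_add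
        _ = ((B + C).map fun xy => aeval (val xy) ((∏ j, X (Sum.inl j)) * p)).sum
              + ((B + C).map fun xy => aeval (val xy) ((∏ j, X (Sum.inl j)) * q)).sum := by
            rw [hp, hq]
        _ = _ := by
            rw [← Multiset.sum_map_add]
            exact congrArg Multiset.sum (Multiset.map_congr rfl fun xy _ => (expand xy).symm)
  -- counting argument
  ext q
  by_cases hq : ∀ j, q.1 j ≠ q.2 j
  · rw [Multiset.count_filter_of_pos hq, Multiset.count_filter_of_pos hq]
    -- interpolation polynomial
    set S : Finset ((Fin n → ℝ) × (Fin n → ℝ)) := (A + D + B + C).toFinset.erase q with hS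
    have hsep : ∀ q' ∈ S, ∃ s, val q' s ≠ val q s := by
      intro q' hq'
      by_contra hcon
      push_neg at hcon
      exact (Finset.ne_of_mem_erase hq') (val_inj (funext hcon))
    choose sel hsel using hsep
    set G : MvPolynomial (Fin n ⊕ Fin n) ℝ :=
      ∏ q' ∈ S.attach, (MvPolynomial.C (val q (sel q' q'.2) - val q' (sel q' q'.2))⁻¹
        * (X (sel q' q'.2) - MvPolynomial.C (val q'.1 (sel q' q'.2)))) with hG
    set Fp : MvPolynomial (Fin n ⊕ Fin n) ℝ := (∏ j, X (Sum.inl j)) * G with hFp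
    set cval : ℝ := ∏ j, (q.2 j - q.1 j) with hcval
    have hcval_ne : cval ≠ 0 := by
      rw [hcval]
      exact Finset.prod_ne_zero_iff.2 fun j _ => sub_ne_zero.2 (fun hh => hq j hh.symm)
    have evalq : aeval (val q) Fp = cval := by
      rw [hFp, map_mul, hG]
      simp only [map_prod]
      have h1 : ∏ j, aeval (val q) (X (Sum.inl j) : MvPolynomial (Fin n ⊕ Fin n) ℝ) = cval := by
        simp [hvaldef, hcval]
      have h2 : ∀ q' ∈ S.attach,
          aeval (val q) (MvPolynomial.C (val q (sel q'.1 q'.2) - val q'.1 (sel q'.1 q'.2))⁻¹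
            * (X (sel q'.1 q'.2) - MvPolynomial.C (val q'.1 (sel q'.1 q'.2)))) = 1 := by
        intro q' _
        have hne : val q (sel q'.1 q'.2) - val q'.1 (sel q'.1 q'.2) ≠ 0 :=
          sub_ne_zero.2 (Ne.symm (hsel q'.1 q'.2))
        simp only [map_mul, map_sub, aeval_X, aeval_C, Algebra.algebraMap_self_apply]
        exact inv_mul_cancel₀ hne
      rw [Finset.prod_congr rfl h2, h1]; simp
    have evalne : ∀ q', q' ∈ S → aeval (val q') Fp = 0 := by
      intro q' hq'
      rw [hFp, map_mul, hG]
      simp only [map_prod]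
      have : aeval (val q') (MvPolynomial.C (val q (sel q' hq') - val q' (sel q' hq'))⁻¹
          * (X (sel q' hq') - MvPolynomial.C (val q' (sel q' hq')))) = 0 := by
        simp
      rw [Finset.prod_eq_zero (Finset.mem_attach S ⟨q', hq'⟩) this, mul_zero]
    have evptwise : ∀ (M : Multiset ((Fin n → ℝ) × (Fin n → ℝ))), M ≤ A + D + B + C →
        (M.map fun xy => aeval (val xy) Fp).sum = M.count q * cval := by
      intro M hM
      rw [← sum_map_ite M q cval]
      refine congrArg Multiset.sum (Multiset.map_congr rfl fun xy hxy => ?_)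
      by_cases hxq : xy = q
      · simp [hxq, evalq]
      · have : xy ∈ S := Finset.mem_erase.2 ⟨hxq, Multiset.mem_toFinset.2 (Multiset.mem_of_le hM hxy)⟩
        simp [hxq, evalne xy this]
    have keyFp := key G
    rw [← hFp] at keyFp
    have e1 : A + D ≤ A + D + B + C := by
      calc A + D ≤ A + D + B := Multiset.le_add_right _ _
        _ ≤ A + D + B + C := Multiset.le_add_right _ _
    have e2 : B + C ≤ A + D + B + C := by
      have : B + C ≤ A + D + (B + C) := Multiset.le_add_left _ _
      rwa [← add_assoc] at this
    have f1 := evptwise (A + D) e1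
    have f2 := evptwise (B + C) e2
    rw [f1, f2] at keyFp
    exact_mod_cast mul_right_cancel₀ hcval_ne keyFp
  · rw [Multiset.count_filter_of_neg hq, Multiset.count_filter_of_neg hq]
end

section
/- Let m, N ≥ 1 and let z : {1,…,m} × {1,…,N} → ℝ have all values positive, with the rows z_i = (z_{i,1}, …, z_{i,N}) in decreasing lexicographic order, i.e., z_1 ≥_lex z_2 ≥_lex ⋯ ≥_lex z_m. Then for every i ∈ {1,…,m} and j ∈ {1,…,N}, z_{i,j} = lim_{k→∞} ( ( Σ_{i'=1}^m ∏_{j'=1}^{j} z_{i',j'}^{k^{j+1−j'}} − Σ_{i'=1}^{i−1} ∏_{j'=1}^{j} z_{i',j'}^{k^{j+1−j'}} ) / ∏_{j'=1}^{j−1} z_{i,j'}^{k^{j+1−j'}} )^{1/k}, where k ranges over the natural numbers. -/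
open Filter

lemma aux1 {N : ℕ} (j j0 : Fin N) (hj0 : j0 ≤ j) (g : Fin N → ℝ)
    (h0 : ∀ j', j' < j0 → g j' = 0) (hpos : 0 < g j0) :
    ∀ᶠ k : ℕ in atTop,
      0 ≤ ∑ j' ∈ Finset.univ.filter (fun j' : Fin N => j' ≤ j),
        (k : ℝ) ^ ((j : ℕ) - (j' : ℕ) + 1) * g j' := by
  set s := Finset.univ.filter (fun j' : Fin N => j' ≤ j) with hs
  have hj0s : j0 ∈ s := by simp [hs, hj0]
  set C := ∑ j' ∈ s.erase j0, |g j'| with hC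
  have hC0 : 0 ≤ C := Finset.sum_nonneg fun _ _ => abs_nonneg _
  filter_upwards [Filter.eventually_ge_atTop 1,
    (tendsto_natCast_atTop_atTop (R := ℝ)).eventually_ge_atTop (C / g j0)] with k hk1 hk2
  have hk1' : (1:ℝ) ≤ (k:ℝ) := by exact_mod_cast hk1
  have hk0 : (0:ℝ) ≤ (k:ℝ) := le_trans zero_le_one hk1'
  set d := (j:ℕ) - (j0:ℕ) with hd
  have hkd : (0:ℝ) ≤ (k:ℝ) ^ d := pow_nonneg hk0 _
  have hterm : ∀ j' ∈ s.erase j0,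
      -((k:ℝ) ^ d * |g j'|) ≤ (k : ℝ) ^ ((j : ℕ) - (j' : ℕ) + 1) * g j' := by
    intro j' hj'
    rcases Finset.mem_erase.mp hj' with ⟨hne, hmem⟩
    have hj'j : (j':ℕ) ≤ (j:ℕ) := by
      have := (Finset.mem_filter.mp hmem).2
      exact this
    by_cases hlt : j' < j0
    · rw [h0 j' hlt, mul_zero]
      exact neg_nonpos_of_nonneg (mul_nonneg hkd (abs_nonneg _))
    · have hgt : (j0:ℕ) < (j':ℕ) := by
        have h1 : j0 ≤ j' := not_lt.mp hlt
        have h2 : (j0:ℕ) ≤ (j':ℕ) := h1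
        have h3 : (j0:ℕ) ≠ (j':ℕ) := fun h => hne (Fin.ext h.symm)
        omega
      have hexp : (j:ℕ) - (j':ℕ) + 1 ≤ d := by omega
      have hple : (k:ℝ) ^ ((j:ℕ) - (j':ℕ) + 1) ≤ (k:ℝ) ^ d :=
        pow_le_pow_right₀ hk1' hexp
      have h1 : -((k:ℝ) ^ d * |g j'|) ≤ -((k:ℝ) ^ ((j:ℕ) - (j':ℕ) + 1) * |g j'|) := by
        apply neg_le_neg
        exact mul_le_mul_of_nonneg_right hple (abs_nonneg _)
      refine h1.trans ?_
      rw [← mul_neg]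
      exact mul_le_mul_of_nonneg_left (neg_abs_le _) (pow_nonneg hk0 _)
  have hsum : -((k:ℝ) ^ d * C) ≤ ∑ j' ∈ s.erase j0, (k : ℝ) ^ ((j : ℕ) - (j' : ℕ) + 1) * g j' := by
    calc -((k:ℝ)^d * C) = ∑ j' ∈ s.erase j0, -((k:ℝ)^d * |g j'|) := by
          rw [hC, Finset.mul_sum, ← Finset.sum_neg_distrib]
      _ ≤ _ := Finset.sum_le_sum hterm
  have hjj0 : (j:ℕ) - (j0:ℕ) + 1 = d + 1 := rfl
  have hmain : (k:ℝ) ^ d * C ≤ (k:ℝ) ^ ((j:ℕ) - (j0:ℕ) + 1) * g j0 := by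
    rw [hjj0, pow_succ]
    have : C ≤ (k:ℝ) * g j0 := by
      rw [div_le_iff₀ hpos] at hk2
      linarith [hk2]
    calc (k:ℝ)^d * C ≤ (k:ℝ)^d * ((k:ℝ) * g j0) := mul_le_mul_of_nonneg_left this hkd
      _ = (k:ℝ)^d * (k:ℝ) * g j0 := by ring
  rw [← Finset.add_sum_erase s _ hj0s]
  linarith

/-- `u ≤_lex v` on `ℝ^N`: `u = v`, or `u_j < v_j` at the first index `j` where they
differ. -/
def lexLE {N : ℕ} (u v : Fin N → ℝ) : Prop :=
  u = v ∨ ∃ j, (∀ j', j' < j → u j' = v j') ∧ u j < v j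

lemma aux2 {N : ℕ} (j : Fin N) (u v : Fin N → ℝ) (hu : ∀ j', 0 < u j') (hv : ∀ j', 0 < v j')
    (h : lexLE v u) :
    ∀ᶠ k : ℕ in atTop,
      ∏ j' ∈ Finset.univ.filter (fun j' : Fin N => j' ≤ j),
          v j' ^ ((k : ℝ) ^ ((j : ℕ) - (j' : ℕ) + 1))
        ≤ ∏ j' ∈ Finset.univ.filter (fun j' : Fin N => j' ≤ j),
          u j' ^ ((k : ℝ) ^ ((j : ℕ) - (j' : ℕ) + 1)) := by
  rcases h with h | ⟨j0, heq, hlt⟩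
  · simp [h]
  by_cases hj0 : j0 ≤ j
  · have key := aux1 j j0 hj0 (fun j' => Real.log (u j') - Real.log (v j'))
      (fun j' hj' => by beta_reduce; rw [heq j' hj']; ring)
      (by simpa using Real.log_lt_log (hv j0) hlt)
    filter_upwards [key] with k hk
    have hprod : ∀ w : Fin N → ℝ, (∀ j', 0 < w j') →
        ∏ j' ∈ Finset.univ.filter (fun j' : Fin N => j' ≤ j),
            w j' ^ ((k : ℝ) ^ ((j : ℕ) - (j' : ℕ) + 1))
          = Real.exp (∑ j' ∈ Finset.univ.filter (fun j' : Fin N => j' ≤ j),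
            (k : ℝ) ^ ((j : ℕ) - (j' : ℕ) + 1) * Real.log (w j')) := by
      intro w hw
      rw [Real.exp_sum]
      refine Finset.prod_congr rfl fun j' _ => ?_
      rw [Real.rpow_def_of_pos (hw j'), mul_comm]
    rw [hprod u hu, hprod v hv, Real.exp_le_exp]
    have : ∑ j' ∈ Finset.univ.filter (fun j' : Fin N => j' ≤ j),
        (k : ℝ) ^ ((j : ℕ) - (j' : ℕ) + 1) * Real.log (u j')
        - ∑ j' ∈ Finset.univ.filter (fun j' : Fin N => j' ≤ j),
        (k : ℝ) ^ ((j : ℕ) - (j' : ℕ) + 1) * Real.log (v j')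
        = ∑ j' ∈ Finset.univ.filter (fun j' : Fin N => j' ≤ j),
        (k : ℝ) ^ ((j : ℕ) - (j' : ℕ) + 1) * (Real.log (u j') - Real.log (v j')) := by
      rw [← Finset.sum_sub_distrib]
      exact Finset.sum_congr rfl fun j' _ => by ring
    linarith [hk, this]
  · have : ∀ j' ∈ Finset.univ.filter (fun j' : Fin N => j' ≤ j), v j' = u j' := by
      intro j' hj'
      have h1 : j' ≤ j := (Finset.mem_filter.mp hj').2
      exact heq j' (lt_of_le_of_lt h1 (not_le.mp hj0))
    apply Filter.Eventually.of_forall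
    intro k
    exact le_of_eq (Finset.prod_congr rfl fun j' hj' => by rw [this j' hj'])

lemma aux3 (m N : ℕ) (z : Fin m → Fin N → ℝ) (hz : ∀ i j, 0 < z i j)
    (hlex : ∀ i i' : Fin m, i ≤ i' → lexLE (z i') (z i)) (i : Fin m) (j : Fin N) :
    Tendsto (fun k : ℕ =>
      ((∑ i' ∈ Finset.univ.filter (fun i' : Fin m => ¬ i' < i),
          ∏ j' ∈ Finset.univ.filter (fun j' : Fin N => j' ≤ j),
            z i' j' ^ ((k:ℝ) ^ ((j:ℕ) - (j':ℕ) + 1))) /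
        ∏ j' ∈ Finset.univ.filter (fun j' : Fin N => j' < j),
          z i j' ^ ((k:ℝ) ^ ((j:ℕ) - (j':ℕ) + 1))) ^ ((k:ℝ)⁻¹))
    atTop (nhds (z i j)) := by
  classical
  set a := z i j with ha_def
  have ha : 0 < a := hz i j
  set P : Fin m → ℕ → ℝ := fun i' k =>
    ∏ j' ∈ Finset.univ.filter (fun j' : Fin N => j' ≤ j),
      z i' j' ^ ((k:ℝ) ^ ((j:ℕ) - (j':ℕ) + 1)) with hP
  set D : ℕ → ℝ := fun k =>
    ∏ j' ∈ Finset.univ.filter (fun j' : Fin N => j' < j),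
      z i j' ^ ((k:ℝ) ^ ((j:ℕ) - (j':ℕ) + 1)) with hD
  set T : Finset (Fin m) := Finset.univ.filter (fun i' => ¬ i' < i) with hT
  show Tendsto (fun k : ℕ => ((∑ i' ∈ T, P i' k) / D k) ^ ((k:ℝ)⁻¹)) atTop (nhds a)
  have hPpos : ∀ i' k, 0 < P i' k := fun i' k =>
    Finset.prod_pos fun j' _ => Real.rpow_pos_of_pos (hz i' j') _
  have hDpos : ∀ k, 0 < D k := fun k =>
    Finset.prod_pos fun j' _ => Real.rpow_pos_of_pos (hz i j') _
  have hsplit : Finset.univ.filter (fun j' : Fin N => j' ≤ j)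
      = insert j (Finset.univ.filter (fun j' : Fin N => j' < j)) := by
    ext x
    simp [Finset.mem_insert, le_iff_lt_or_eq, or_comm]
  have hPD : ∀ k : ℕ, P i k = a ^ (k:ℝ) * D k := by
    intro k
    show ∏ j' ∈ Finset.univ.filter (fun j' : Fin N => j' ≤ j),
      z i j' ^ ((k:ℝ) ^ ((j:ℕ) - (j':ℕ) + 1)) = _
    rw [hsplit, Finset.prod_insert (by simp)]
    have h1 : (j:ℕ) - (j:ℕ) + 1 = 1 := by omega
    rw [h1, pow_one]
  have hiT : i ∈ T := by simp [hT]
  have hub : ∀ᶠ k : ℕ in atTop, ∀ i' ∈ T, P i' k ≤ P i k := by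
    rw [Filter.eventually_all_finset]
    intro i' hi'
    have hii' : i ≤ i' := not_lt.mp (by simpa [hT] using hi')
    exact aux2 j (z i) (z i') (hz i) (hz i') (hlex i i' hii')
  have hlow : ∀ k : ℕ, a ^ (k:ℝ) ≤ (∑ i' ∈ T, P i' k) / D k := by
    intro k
    rw [le_div_iff₀ (hDpos k)]
    calc a^(k:ℝ) * D k = P i k := (hPD k).symm
      _ ≤ ∑ i' ∈ T, P i' k := Finset.single_le_sum (fun i' _ => (hPpos i' k).le) hiT
  have hhigh : ∀ᶠ k : ℕ in atTop, (∑ i' ∈ T, P i' k) / D k ≤ (m:ℝ) * a ^ (k:ℝ) := by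
    filter_upwards [hub] with k hk
    rw [div_le_iff₀ (hDpos k)]
    calc ∑ i' ∈ T, P i' k ≤ ∑ i' ∈ T, P i k := Finset.sum_le_sum hk
      _ = T.card * P i k := by rw [Finset.sum_const, nsmul_eq_mul]
      _ ≤ m * P i k := by
          apply mul_le_mul_of_nonneg_right _ (hPpos i k).le
          exact_mod_cast (Finset.card_le_univ T).trans_eq (by simp)
      _ = m * (a^(k:ℝ) * D k) := by rw [hPD k]
      _ = m * a^(k:ℝ) * D k := by ring
  have hlow' : ∀ᶠ k : ℕ in atTop, a ≤ ((∑ i' ∈ T, P i' k) / D k) ^ ((k:ℝ)⁻¹) := by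
    filter_upwards [eventually_ge_atTop 1] with k hk1
    have hk0 : (k:ℝ) ≠ 0 := Nat.cast_ne_zero.mpr (by omega)
    calc a = (a ^ (k:ℝ)) ^ ((k:ℝ)⁻¹) := by
          rw [← Real.rpow_mul ha.le, mul_inv_cancel₀ hk0, Real.rpow_one]
      _ ≤ _ := Real.rpow_le_rpow (Real.rpow_nonneg ha.le _) (hlow k)
          (inv_nonneg.mpr (Nat.cast_nonneg k))
  have hhigh' : ∀ᶠ k : ℕ in atTop,
      ((∑ i' ∈ T, P i' k) / D k) ^ ((k:ℝ)⁻¹) ≤ (m:ℝ) ^ ((k:ℝ)⁻¹) * a := by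
    filter_upwards [hhigh, eventually_ge_atTop 1] with k hk hk1
    have hk0 : (k:ℝ) ≠ 0 := Nat.cast_ne_zero.mpr (by omega)
    calc ((∑ i' ∈ T, P i' k) / D k) ^ ((k:ℝ)⁻¹)
        ≤ ((m:ℝ) * a^(k:ℝ)) ^ ((k:ℝ)⁻¹) :=
          Real.rpow_le_rpow (div_nonneg (Finset.sum_nonneg fun i' _ => (hPpos i' k).le)
            (hDpos k).le) hk (inv_nonneg.mpr (Nat.cast_nonneg k))
      _ = (m:ℝ)^((k:ℝ)⁻¹) * (a^(k:ℝ))^((k:ℝ)⁻¹) :=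
          Real.mul_rpow (Nat.cast_nonneg m) (Real.rpow_nonneg ha.le _)
      _ = (m:ℝ)^((k:ℝ)⁻¹) * a := by
          rw [← Real.rpow_mul ha.le, mul_inv_cancel₀ hk0, Real.rpow_one]
  have htop : Tendsto (fun k : ℕ => (m:ℝ) ^ ((k:ℝ)⁻¹) * a) atTop (nhds a) := by
    have hm0 : (m:ℝ) ≠ 0 := Nat.cast_ne_zero.mpr (Fin.pos i).ne'
    have h1 : Tendsto (fun k : ℕ => ((k:ℝ))⁻¹) atTop (nhds 0) :=
      tendsto_inv_atTop_zero.comp tendsto_natCast_atTop_atTop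
    have h2 : Tendsto (fun k : ℕ => (m:ℝ) ^ ((k:ℝ)⁻¹)) atTop (nhds 1) := by
      have h3 := (Real.continuousAt_const_rpow (b := (0:ℝ)) hm0).tendsto.comp h1
      simpa [Function.comp_def] using h3
    have := h2.mul_const a
    simpa using this
  exact tendsto_of_tendsto_of_tendsto_of_le_of_le' tendsto_const_nhds htop hlow' hhigh'

/-- For `z : {1,…,m} × {1,…,N} → ℝ` with all values positive and rows in
decreasing lexicographic order, every value `z_{i,j}` is recovered as
`lim_{k→∞} ((Σ_{i'=1}^m ∏_{j'=1}^j z_{i',j'}^{k^{j+1-j'}}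
  − Σ_{i'=1}^{i-1} ∏_{j'=1}^j z_{i',j'}^{k^{j+1-j'}}) / ∏_{j'=1}^{j-1} z_{i,j'}^{k^{j+1-j'}})^{1/k}`.
Indices here are 0-based (`i : Fin m`, `j : Fin N`), so `j' ≤ j` ranges over the 1-based
`j' = 1, …, j+1` and the exponent `k^{(j+1)+1-(j'+1)} = k^{j-j'+1}`; powers with real
exponents are real powers.  Empty sums are 0 and empty products are 1. -/
theorem stmt18 (m N : ℕ) (hm : 1 ≤ m) (hN : 1 ≤ N)
    (z : Fin m → Fin N → ℝ) (hz : ∀ i j, 0 < z i j)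
    (hlex : ∀ i i' : Fin m, i ≤ i' → lexLE (z i') (z i))
    (i : Fin m) (j : Fin N) :
    Tendsto
      (fun k : ℕ =>
        (((∑ i' : Fin m, ∏ j' ∈ Finset.univ.filter (fun j' : Fin N => j' ≤ j),
              z i' j' ^ ((k : ℝ) ^ ((j : ℕ) - (j' : ℕ) + 1))) -
          ∑ i' ∈ Finset.univ.filter (fun i' : Fin m => i' < i),
            ∏ j' ∈ Finset.univ.filter (fun j' : Fin N => j' ≤ j),
              z i' j' ^ ((k : ℝ) ^ ((j : ℕ) - (j' : ℕ) + 1))) /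
          ∏ j' ∈ Finset.univ.filter (fun j' : Fin N => j' < j),
            z i j' ^ ((k : ℝ) ^ ((j : ℕ) - (j' : ℕ) + 1))) ^ ((k : ℝ)⁻¹))
      atTop (nhds (z i j)) := by
  have h := aux3 m N z hz hlex i j
  have hfun : (fun k : ℕ =>
        (((∑ i' : Fin m, ∏ j' ∈ Finset.univ.filter (fun j' : Fin N => j' ≤ j),
              z i' j' ^ ((k : ℝ) ^ ((j : ℕ) - (j' : ℕ) + 1))) -
          ∑ i' ∈ Finset.univ.filter (fun i' : Fin m => i' < i),
            ∏ j' ∈ Finset.univ.filter (fun j' : Fin N => j' ≤ j),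
              z i' j' ^ ((k : ℝ) ^ ((j : ℕ) - (j' : ℕ) + 1))) /
          ∏ j' ∈ Finset.univ.filter (fun j' : Fin N => j' < j),
            z i j' ^ ((k : ℝ) ^ ((j : ℕ) - (j' : ℕ) + 1))) ^ ((k : ℝ)⁻¹))
      = (fun k : ℕ =>
      ((∑ i' ∈ Finset.univ.filter (fun i' : Fin m => ¬ i' < i),
          ∏ j' ∈ Finset.univ.filter (fun j' : Fin N => j' ≤ j),
            z i' j' ^ ((k:ℝ) ^ ((j:ℕ) - (j':ℕ) + 1))) /
        ∏ j' ∈ Finset.univ.filter (fun j' : Fin N => j' < j),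
          z i j' ^ ((k:ℝ) ^ ((j:ℕ) - (j':ℕ) + 1))) ^ ((k:ℝ)⁻¹)) := by
    funext k
    congr 2
    rw [← Finset.sum_filter_add_sum_filter_not Finset.univ (fun i' : Fin m => i' < i)
      (fun i' => ∏ j' ∈ Finset.univ.filter (fun j' : Fin N => j' ≤ j),
        z i' j' ^ ((k : ℝ) ^ ((j : ℕ) - (j' : ℕ) + 1)))]
    ring
  rw [hfun]
  exact h
end
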